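/- Let n ≥ 1 and let K ⊆ ℝ^{n+1} be a convex cone (containing 0) in Minkowski space E^{n+1}_1 such that every nonzero element of K is spacelike. Then either K is contained in a linear subspace of ℝ^{n+1} of dimension at most n, or K has nonempty interior in ℝ^{n+1} and the dual cone K* contains a pair of linearly independent null vectors u and u′ with u ∈ F and u′ ∈ P. -/

import Mathlib

open Set Pointwise

/-- The Minkowski bilinear form on `ℝ^(n+1)`:
`⟪x,y⟫ = x₁y₁ + ⋯ + xₙyₙ − x_{n+1}y_{n+1}`. -/
def mink {n : ℕ} (x y : EuclideanSpace ℝ (Fin (n + 1))) : ℝ :=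
  (∑ i : Fin n, x i.castSucc * y i.castSucc) - x (Fin.last n) * y (Fin.last n)

/-- The closed future cone in Minkowski space. -/
def futureCone (n : ℕ) : Set (EuclideanSpace ℝ (Fin (n + 1))) :=
  {v | mink v v ≤ 0 ∧ 0 ≤ v (Fin.last n)}

/-- The closed past cone in Minkowski space: `P = -F`. -/
def pastCone (n : ℕ) : Set (EuclideanSpace ℝ (Fin (n + 1))) :=
  -futureCone n

/-- The dual cone of a set with respect to the Minkowski form. -/
def minkDual {n : ℕ} (K : Set (EuclideanSpace ℝ (Fin (n + 1)))) :
    Set (EuclideanSpace ℝ (Fin (n + 1))) :=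
  {xs | ∀ x ∈ K, 0 ≤ mink xs x}

namespace Stmt7

variable {n : ℕ}

/-- spatial part -/
def sp (x : EuclideanSpace ℝ (Fin (n + 1))) : EuclideanSpace ℝ (Fin n) :=
  WithLp.toLp 2 (fun i : Fin n => x i.castSucc)

/-- time part -/
def tm (x : EuclideanSpace ℝ (Fin (n + 1))) : ℝ := x (Fin.last n)

/-- build a vector -/
def mk' (a : EuclideanSpace ℝ (Fin n)) (t : ℝ) : EuclideanSpace ℝ (Fin (n + 1)) :=
  WithLp.toLp 2 (Fin.snoc (α := fun _ => ℝ) (fun i => a i) t)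

@[simp] lemma sp_mk' (a : EuclideanSpace ℝ (Fin n)) (t : ℝ) : sp (mk' a t) = a :=
  by ext i; simp [sp, mk']

@[simp] lemma tm_mk' (a : EuclideanSpace ℝ (Fin n)) (t : ℝ) : tm (mk' a t) = t := by
  simp [tm, mk']

lemma mk'_sp_tm (x : EuclideanSpace ℝ (Fin (n + 1))) : mk' (sp x) (tm x) = x :=
  by ext i; refine Fin.lastCases ?_ (fun i => ?_) i <;> simp [mk', sp, tm]

@[simp] lemma sp_add (x y : EuclideanSpace ℝ (Fin (n + 1))) : sp (x + y) = sp x + sp y := by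
  ext i; simp [sp]
@[simp] lemma sp_smul (c : ℝ) (x : EuclideanSpace ℝ (Fin (n + 1))) : sp (c • x) = c • sp x := by
  ext i; simp [sp]
@[simp] lemma tm_add (x y : EuclideanSpace ℝ (Fin (n + 1))) : tm (x + y) = tm x + tm y := rfl
@[simp] lemma tm_smul (c : ℝ) (x : EuclideanSpace ℝ (Fin (n + 1))) : tm (c • x) = c * tm x := rfl
@[simp] lemma sp_zero : sp (0 : EuclideanSpace ℝ (Fin (n + 1))) = 0 := by
  ext i; simp [sp]
@[simp] lemma tm_zero : tm (0 : EuclideanSpace ℝ (Fin (n + 1))) = 0 := rfl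

lemma mk'_add (a b : EuclideanSpace ℝ (Fin n)) (s t : ℝ) :
    mk' a s + mk' b t = mk' (a + b) (s + t) := by
  have := mk'_sp_tm (mk' a s + mk' b t)
  rw [← this]; simp

lemma mk'_smul (c : ℝ) (a : EuclideanSpace ℝ (Fin n)) (t : ℝ) :
    c • mk' a t = mk' (c • a) (c * t) := by
  have := mk'_sp_tm (c • mk' a t)
  rw [← this]; simp

@[simp] lemma mk'_zero : mk' (0 : EuclideanSpace ℝ (Fin n)) (0:ℝ) = 0 := by
  have := mk'_sp_tm (0 : EuclideanSpace ℝ (Fin (n+1)))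
  simpa using this

def spL : EuclideanSpace ℝ (Fin (n + 1)) →ₗ[ℝ] EuclideanSpace ℝ (Fin n) where
  toFun := sp
  map_add' x y := sp_add x y
  map_smul' c x := sp_smul c x

def tmL : EuclideanSpace ℝ (Fin (n + 1)) →ₗ[ℝ] ℝ where
  toFun := tm
  map_add' x y := rfl
  map_smul' c x := rfl

lemma cont_sp : Continuous (sp (n := n)) := spL.continuous_of_finiteDimensional
lemma cont_tm : Continuous (tm (n := n)) := tmL.continuous_of_finiteDimensional

lemma inner_split (v x : EuclideanSpace ℝ (Fin (n + 1))) :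
    (inner ℝ v x : ℝ) = (inner ℝ (sp v) (sp x) : ℝ) + tm v * tm x := by
  simp only [PiLp.inner_apply, RCLike.inner_apply, conj_trivial]
  rw [Fin.sum_univ_castSucc]
  simp [sp, tm, mul_comm]

lemma mink_eq_inner (x y : EuclideanSpace ℝ (Fin (n + 1))) :
    mink x y = (inner ℝ (sp x) (sp y) : ℝ) - tm x * tm y := by
  simp only [mink, PiLp.inner_apply, RCLike.inner_apply, conj_trivial]
  simp [sp, tm, mul_comm]

lemma mink_self (x : EuclideanSpace ℝ (Fin (n + 1))) :
    mink x x = ‖sp x‖ ^ 2 - tm x ^ 2 := by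
  rw [mink_eq_inner, real_inner_self_eq_norm_sq]; ring

lemma mink_mk'_left (a : EuclideanSpace ℝ (Fin n)) (t : ℝ) (x : EuclideanSpace ℝ (Fin (n + 1))) :
    mink (mk' a t) x = (inner ℝ a (sp x) : ℝ) - t * tm x := by
  rw [mink_eq_inner]; simp

lemma mink_add_right (u x y : EuclideanSpace ℝ (Fin (n + 1))) :
    mink u (x + y) = mink u x + mink u y := by
  simp only [mink_eq_inner, sp_add, tm_add, inner_add_right]; ring

lemma mink_smul_right (c : ℝ) (u x : EuclideanSpace ℝ (Fin (n + 1))) :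
    mink u (c • x) = c * mink u x := by
  simp only [mink_eq_inner, sp_smul, tm_smul, real_inner_smul_right]; ring

def minkLinear (u : EuclideanSpace ℝ (Fin (n + 1))) : EuclideanSpace ℝ (Fin (n + 1)) →ₗ[ℝ] ℝ where
  toFun := mink u
  map_add' x y := mink_add_right u x y
  map_smul' c x := mink_smul_right c u x

lemma norm_sq_split (x : EuclideanSpace ℝ (Fin (n + 1))) :
    ‖x‖ ^ 2 = ‖sp x‖ ^ 2 + tm x ^ 2 := by
  have h1 : ‖x‖ ^ 2 = (inner ℝ x x : ℝ) := (real_inner_self_eq_norm_sq x).symm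
  have h2 : ‖sp x‖ ^ 2 = (inner ℝ (sp x) (sp x) : ℝ) := (real_inner_self_eq_norm_sq (sp x)).symm
  rw [h1, h2, inner_split]; ring


lemma mem_futureCone_iff (x : EuclideanSpace ℝ (Fin (n + 1))) :
    x ∈ futureCone n ↔ ‖sp x‖ ≤ tm x := by
  have hms := mink_self x
  constructor
  · rintro ⟨h1, h2⟩
    have h2' : 0 ≤ tm x := h2
    nlinarith [norm_nonneg (sp x)]
  · intro h
    have h0 : (0:ℝ) ≤ tm x := le_trans (norm_nonneg _) h
    constructor
    · nlinarith [norm_nonneg (sp x)]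
    · exact h0

lemma strict_subset_interior :
    {x : EuclideanSpace ℝ (Fin (n + 1)) | ‖sp x‖ < tm x} ⊆ interior (futureCone n) := by
  apply interior_maximal
  · exact fun x hx => (mem_futureCone_iff x).mpr (le_of_lt hx)
  · exact isOpen_lt cont_sp.norm cont_tm

lemma norm_e : ‖mk' (0 : EuclideanSpace ℝ (Fin n)) 1‖ = 1 := by
  have h := norm_sq_split (mk' (0 : EuclideanSpace ℝ (Fin n)) 1)
  simp only [sp_mk', tm_mk', norm_zero] at h
  have h2 : (‖mk' (0 : EuclideanSpace ℝ (Fin n)) 1‖ - 1) *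
      (‖mk' (0 : EuclideanSpace ℝ (Fin n)) 1‖ + 1) = 0 := by nlinarith
  rcases mul_eq_zero.mp h2 with h3 | h3
  · linarith
  · have := norm_nonneg (mk' (0 : EuclideanSpace ℝ (Fin n)) 1); linarith

lemma interior_F_strict {x : EuclideanSpace ℝ (Fin (n + 1))}
    (hx : x ∈ interior (futureCone n)) : ‖sp x‖ < tm x := by
  rw [mem_interior_iff_mem_nhds, Metric.mem_nhds_iff] at hx
  obtain ⟨ε, hε, hball⟩ := hx
  set e : EuclideanSpace ℝ (Fin (n + 1)) := mk' 0 1 with he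
  have hz : x - (ε / 2) • e ∈ futureCone n := by
    apply hball
    rw [Metric.mem_ball, dist_eq_norm]
    have : x - (ε / 2) • e - x = -((ε / 2) • e) := by abel
    rw [this, norm_neg, norm_smul, he, norm_e]
    simp [abs_of_pos hε]
    linarith
  rw [mem_futureCone_iff] at hz
  have h1 : sp (x - (ε / 2) • e) = sp x := by
    have : x - (ε / 2) • e = x + (-(ε / 2)) • e := by module
    rw [this, sp_add, sp_smul, he, sp_mk']
    simp
  have h2 : tm (x - (ε / 2) • e) = tm x - ε / 2 := by
    have : x - (ε / 2) • e = x + (-(ε / 2)) • e := by module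
    rw [this, tm_add, tm_smul, he, tm_mk']
    ring
  rw [h1, h2] at hz
  linarith

lemma convex_futureCone : Convex ℝ (futureCone n) := by
  intro x hx y hy a b ha hb hab
  rw [mem_futureCone_iff] at hx hy ⊢
  have h1 : sp (a • x + b • y) = a • sp x + b • sp y := by rw [sp_add, sp_smul, sp_smul]
  have h2 : tm (a • x + b • y) = a * tm x + b * tm y := by rw [tm_add, tm_smul, tm_smul]
  rw [h1, h2]
  calc ‖a • sp x + b • sp y‖ ≤ ‖a • sp x‖ + ‖b • sp y‖ := norm_add_le _ _
    _ = a * ‖sp x‖ + b * ‖sp y‖ := by rw [norm_smul, norm_smul, Real.norm_eq_abs,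
        Real.norm_eq_abs, abs_of_nonneg ha, abs_of_nonneg hb]
    _ ≤ a * tm x + b * tm y := by
        apply add_le_add
        · exact mul_le_mul_of_nonneg_left hx ha
        · exact mul_le_mul_of_nonneg_left hy hb

lemma le_zero_of_forall_add {C B : ℝ} (h : ∀ ε : ℝ, 0 < ε → C + ε * B < 0) : C ≤ 0 := by
  by_contra hC
  push_neg at hC
  rcases le_or_gt B 0 with hB | hB
  · have h1 := h (C / (2 * max 1 (-B))) (by positivity)
    have hmax : 0 < max 1 (-B) := lt_of_lt_of_le one_pos (le_max_left _ _)
    have hB' : -B ≤ max 1 (-B) := le_max_right _ _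
    have : C / (2 * max 1 (-B)) * B ≥ -(C / 2) := by
      rw [ge_iff_le, neg_le]
      have hq : C / (2 * max 1 (-B)) * (-B) ≤ C / (2 * max 1 (-B)) * max 1 (-B) := by
        apply mul_le_mul_of_nonneg_left hB' (by positivity)
      have heq : C / (2 * max 1 (-B)) * max 1 (-B) = C / 2 := by
        field_simp
      calc -(C / (2 * max 1 (-B)) * B) = C / (2 * max 1 (-B)) * (-B) := by ring
        _ ≤ C / 2 := heq ▸ hq
    linarith
  · have h1 := h 1 one_pos
    nlinarith

lemma graph_contradiction (K : Set (EuclideanSpace ℝ (Fin (n + 1))))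
    (h0 : (0 : EuclideanSpace ℝ (Fin (n + 1))) ∈ K)
    (hconv : Convex ℝ K)
    (hcone : ∀ c : ℝ, 0 ≤ c → ∀ x ∈ K, c • x ∈ K)
    (hq0 : ∀ x ∈ K, 0 ≤ mink x x)
    (hint : (interior K).Nonempty)
    (hbex : ∀ b : EuclideanSpace ℝ (Fin n), b ≠ 0 → ∃ x ∈ K, (inner ℝ b (sp x) : ℝ) < 0) :
    False := by
  obtain ⟨x₀, hx₀⟩ := hint
  have hx₀K : x₀ ∈ K := interior_subset hx₀
  have hcontq : Continuous fun z : EuclideanSpace ℝ (Fin (n+1)) => mink z z := by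
    have heq : (fun z : EuclideanSpace ℝ (Fin (n+1)) => mink z z)
        = fun z => ‖sp z‖ ^ 2 - tm z ^ 2 := funext fun z => mink_self z
    rw [heq]
    exact (cont_sp.norm.pow 2).sub (cont_tm.pow 2)
  have hq0C : ∀ x ∈ closure K, 0 ≤ mink x x := by
    intro x hx
    have hsub : closure K ⊆ {z : EuclideanSpace ℝ (Fin (n+1)) | 0 ≤ mink z z} :=
      closure_minimal (fun z hz => hq0 z hz) (isClosed_le continuous_const hcontq)
    exact hsub hx
  have hclcone : ∀ (c : ℝ), 0 ≤ c → ∀ x ∈ closure K, c • x ∈ closure K := by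
    intro c hc x hx
    exact map_mem_closure (continuous_const_smul c) hx (fun y hy => hcone c hc y hy)
  have hcladd : ∀ p q : EuclideanSpace ℝ (Fin (n+1)),
      p ∈ closure K → q ∈ closure K → p + q ∈ closure K := by
    intro p q hp hq
    have hmid : (1/2 : ℝ) • p + (1/2 : ℝ) • q ∈ closure K :=
      hconv.closure hp hq (by norm_num) (by norm_num) (by norm_num)
    have h2 := hclcone 2 (by norm_num) _ hmid
    have heq : (2:ℝ) • ((1/2 : ℝ) • p + (1/2 : ℝ) • q) = p + q := by module
    rwa [heq] at h2
  have hfiber : ∀ y : EuclideanSpace ℝ (Fin n), ∃ t : ℝ, mk' y t ∈ closure K := by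
    intro y
    have hyc : y ∈ closure (sp '' K) := by
      by_contra hz
      have hconvS : Convex ℝ (sp '' K) := hconv.linear_image spL
      obtain ⟨f₂, u₂, h₂₁, h₂₂⟩ := geometric_hahn_banach_closed_point
        hconvS.closure isClosed_closure hz
      have h0S : (0 : EuclideanSpace ℝ (Fin n)) ∈ closure (sp '' K) :=
        subset_closure ⟨0, h0, rfl⟩
      have hu₂ : 0 < u₂ := by simpa using h₂₁ _ h0S
      have hf₂ : ∀ x ∈ K, f₂ (sp x) ≤ 0 := by
        intro x hx
        by_contra hgt
        push_neg at hgt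
        have hc : (0:ℝ) ≤ (u₂ + 1) / f₂ (sp x) := by positivity
        have hmem : sp (((u₂ + 1) / f₂ (sp x)) • x) ∈ sp '' K :=
          ⟨_, hcone _ hc x hx, rfl⟩
        have h3 := h₂₁ _ (subset_closure hmem)
        rw [sp_smul] at h3
        rw [map_smul, smul_eq_mul, div_mul_cancel₀ _ (ne_of_gt hgt)] at h3
        linarith
      set b : EuclideanSpace ℝ (Fin n) :=
        -((InnerProductSpace.toDual ℝ (EuclideanSpace ℝ (Fin n))).symm f₂) with hbdef
      have hbinner : ∀ w : EuclideanSpace ℝ (Fin n), (inner ℝ b w : ℝ) = -(f₂ w) := by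
        intro w
        rw [hbdef, inner_neg_left, InnerProductSpace.toDual_symm_apply]
      have hbne2 : b ≠ 0 := by
        intro hb0
        have h4 := hbinner y
        rw [hb0, inner_zero_left] at h4
        have h5 : f₂ y = 0 := by linarith
        rw [h5] at h₂₂
        linarith
      obtain ⟨x, hxK, hxlt⟩ := hbex b hbne2
      have h6 := hbinner (sp x)
      have h7 := hf₂ x hxK
      rw [h6] at hxlt
      linarith
    rw [mem_closure_iff_seq_limit] at hyc
    obtain ⟨ys, hysmem, hyslim⟩ := hyc
    choose xs hxsK hxs_eq using hysmem
    obtain ⟨N, hN⟩ := Metric.tendsto_atTop.mp hyslim 1 one_pos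
    set M : ℝ := ‖y‖ + 1 with hM
    have hbd : ∀ k, xs (N + k) ∈
        Metric.closedBall (0 : EuclideanSpace ℝ (Fin (n+1))) (2 * M) ∩ closure K := by
      intro k
      constructor
      · rw [Metric.mem_closedBall, dist_zero_right]
        have hdk := hN (N + k) (Nat.le_add_right N k)
        rw [dist_eq_norm] at hdk
        have h1 : ‖sp (xs (N + k))‖ ≤ M := by
          rw [hxs_eq]
          calc ‖ys (N + k)‖ = ‖y + (ys (N + k) - y)‖ := by congr 1; abel
            _ ≤ ‖y‖ + ‖ys (N + k) - y‖ := norm_add_le _ _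
            _ ≤ ‖y‖ + 1 := by linarith
        have h2 : tm (xs (N + k)) ^ 2 ≤ ‖sp (xs (N + k))‖ ^ 2 := by
          have h3 := hq0 _ (hxsK (N + k))
          rw [mink_self] at h3
          linarith
        have h3 := norm_sq_split (xs (N + k))
        have hMpos : (0:ℝ) < M := by positivity
        nlinarith [norm_nonneg (xs (N + k)), norm_nonneg (sp (xs (N + k)))]
      · exact subset_closure (hxsK (N + k))
    obtain ⟨x, hxmem, φ, hφ, hxlim⟩ :=
      ((isCompact_closedBall (0 : EuclideanSpace ℝ (Fin (n+1))) (2*M)).inter_right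
        isClosed_closure).tendsto_subseq hbd
    refine ⟨tm x, ?_⟩
    have hspx : sp x = y := by
      have h1 : Filter.Tendsto (fun k => sp (xs (N + φ k))) Filter.atTop (nhds (sp x)) :=
        (cont_sp.tendsto x).comp hxlim
      have h2 : Filter.Tendsto (fun k => ys (N + φ k)) Filter.atTop (nhds y) := by
        apply hyslim.comp
        exact Filter.tendsto_atTop_mono (fun k => Nat.le_add_left (φ k) N) hφ.tendsto_atTop
      have heq : (fun k => sp (xs (N + φ k))) = fun k => ys (N + φ k) :=
        funext fun k => hxs_eq (N + φ k)
      rw [heq] at h1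
      exact tendsto_nhds_unique h1 h2
    rw [← hspx, mk'_sp_tm]
    exact hxmem.2
  have hzero : ∀ t : ℝ, mk' (0 : EuclideanSpace ℝ (Fin n)) t ∈ closure K → t = 0 := by
    intro t ht
    have h1 := hq0C _ ht
    rw [mink_self, sp_mk', tm_mk', norm_zero] at h1
    nlinarith
  obtain ⟨t₂, ht₂⟩ := hfiber (-(sp x₀))
  rw [mem_interior_iff_mem_nhds, Metric.mem_nhds_iff] at hx₀
  obtain ⟨ε, hε, hball⟩ := hx₀
  have hx₁K : x₀ + (ε/2) • mk' (0 : EuclideanSpace ℝ (Fin n)) 1 ∈ K := by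
    apply hball
    rw [Metric.mem_ball, dist_eq_norm]
    have heq : x₀ + (ε/2) • mk' (0 : EuclideanSpace ℝ (Fin n)) 1 - x₀
        = (ε/2) • mk' (0 : EuclideanSpace ℝ (Fin n)) 1 := by abel
    rw [heq, norm_smul, Real.norm_eq_abs, abs_of_pos (by linarith), norm_e]
    linarith
  have hsum0 : mk' (0 : EuclideanSpace ℝ (Fin n)) (tm x₀ + t₂) ∈ closure K := by
    have h2 := hcladd x₀ _ (subset_closure hx₀K) ht₂
    have heq : x₀ + mk' (-(sp x₀)) t₂ = mk' 0 (tm x₀ + t₂) := by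
      conv_lhs => rw [← mk'_sp_tm x₀]
      rw [mk'_add]
      congr 1
      simp
    rwa [heq] at h2
  have hsum1 : mk' (0 : EuclideanSpace ℝ (Fin n)) (tm x₀ + ε/2 + t₂) ∈ closure K := by
    have h2 := hcladd _ _ (subset_closure hx₁K) ht₂
    have heq : x₀ + (ε/2) • mk' (0 : EuclideanSpace ℝ (Fin n)) 1 + mk' (-(sp x₀)) t₂
        = mk' 0 (tm x₀ + ε/2 + t₂) := by
      have h1 : (ε/2) • mk' (0 : EuclideanSpace ℝ (Fin n)) 1
          = mk' (0 : EuclideanSpace ℝ (Fin n)) (ε/2) := by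
        rw [mk'_smul, smul_zero, mul_one]
      conv_lhs => rw [← mk'_sp_tm x₀]
      rw [h1, mk'_add, mk'_add]
      congr 1 <;> simp
    rwa [heq] at h2
  have h1 := hzero _ hsum0
  have h2 := hzero _ hsum1
  linarith

lemma exists_dual_unit (K : Set (EuclideanSpace ℝ (Fin (n + 1))))
    (h0 : (0 : EuclideanSpace ℝ (Fin (n + 1))) ∈ K)
    (hconv : Convex ℝ K)
    (hcone : ∀ c : ℝ, 0 ≤ c → ∀ x ∈ K, c • x ∈ K)
    (hspace : ∀ x ∈ K, x ≠ 0 → 0 < mink x x)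
    (hint : (interior K).Nonempty) :
    ∃ a : EuclideanSpace ℝ (Fin n), ‖a‖ = 1 ∧ ∀ x ∈ K, tm x ≤ (inner ℝ a (sp x) : ℝ) := by
  classical
  have hq0 : ∀ x ∈ K, 0 ≤ mink x x := by
    intro x hx
    rcases eq_or_ne x 0 with rfl | hne
    · simp [mink]
    · exact (hspace x hx hne).le
  have hdisj : Disjoint (interior (futureCone n)) K := by
    rw [Set.disjoint_left]
    intro x hxF hxK
    have hstrict := interior_F_strict hxF
    have hq := hq0 x hxK
    rw [mink_self] at hq
    nlinarith [norm_nonneg (sp x)]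
  obtain ⟨f, u, hfu1, hfu2⟩ :=
    geometric_hahn_banach_open (convex_futureCone.interior) isOpen_interior hconv hdisj
  have hu0 : u ≤ 0 := by simpa using hfu2 0 h0
  have hfK : ∀ x ∈ K, 0 ≤ f x := by
    intro x hx
    by_contra hfx
    push_neg at hfx
    have hc : (0:ℝ) ≤ (u - 1) / f x := by
      rw [← neg_div_neg_eq]
      exact div_nonneg (by linarith) (by linarith)
    have h2 := hfu2 _ (hcone _ hc x hx)
    rw [map_smul, smul_eq_mul, div_mul_cancel₀ _ (ne_of_lt hfx)] at h2
    linarith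
  have hemem : mk' (0 : EuclideanSpace ℝ (Fin n)) 1 ∈ interior (futureCone n) := by
    apply strict_subset_interior
    show ‖sp (mk' (0 : EuclideanSpace ℝ (Fin n)) 1)‖ < tm (mk' (0 : EuclideanSpace ℝ (Fin n)) 1)
    simp
  have hfF : ∀ x ∈ futureCone n, f x ≤ 0 := by
    intro x hx
    apply le_zero_of_forall_add (B := f (mk' 0 1))
    intro ε hε
    have hmem : x + ε • mk' (0 : EuclideanSpace ℝ (Fin n)) 1 ∈ interior (futureCone n) := by
      apply strict_subset_interior
      show ‖sp (x + ε • mk' (0 : EuclideanSpace ℝ (Fin n)) 1)‖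
          < tm (x + ε • mk' (0 : EuclideanSpace ℝ (Fin n)) 1)
      have hxF := (mem_futureCone_iff x).mp hx
      rw [sp_add, sp_smul, sp_mk', tm_add, tm_smul, tm_mk', smul_zero, add_zero, mul_one]
      linarith
    have h3 := hfu1 _ hmem
    rw [map_add, map_smul, smul_eq_mul] at h3
    linarith
  set v : EuclideanSpace ℝ (Fin (n+1)) :=
    (InnerProductSpace.toDual ℝ (EuclideanSpace ℝ (Fin (n+1)))).symm f with hvdef
  have hvx : ∀ x, (inner ℝ v x : ℝ) = f x := fun x => InnerProductSpace.toDual_symm_apply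
  have hvne : v ≠ 0 := by
    intro hv0
    have h1 := hfu1 _ hemem
    have h2 := hvx (mk' (0 : EuclideanSpace ℝ (Fin n)) 1)
    rw [hv0, inner_zero_left] at h2
    rw [← h2] at h1
    linarith
  have hbound : ∀ b : EuclideanSpace ℝ (Fin n), ‖b‖ ≤ 1 → (inner ℝ (sp v) b : ℝ) ≤ -(tm v) := by
    intro b hb
    have hmem : mk' b 1 ∈ futureCone n := (mem_futureCone_iff _).mpr (by simpa using hb)
    have h1 := hfF _ hmem
    rw [← hvx, inner_split, sp_mk', tm_mk', mul_one] at h1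
    linarith
  have hsp_le : ‖sp v‖ ≤ -(tm v) := by
    rcases eq_or_ne (sp v) 0 with h | h
    · rw [h, norm_zero]
      simpa using hbound 0 (by simp)
    · have hne := norm_ne_zero_iff.mpr h
      have hb := hbound (‖sp v‖⁻¹ • sp v) (by
        rw [norm_smul, Real.norm_eq_abs, abs_inv, abs_of_nonneg (norm_nonneg _),
          inv_mul_cancel₀ hne])
      rw [real_inner_smul_right, real_inner_self_eq_norm_sq, sq, ← mul_assoc,
        inv_mul_cancel₀ hne, one_mul] at hb
      exact hb
  have hs_nonneg : 0 ≤ -(tm v) := le_trans (norm_nonneg _) hsp_le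
  have hs_pos : 0 < -(tm v) := by
    rcases hs_nonneg.lt_or_eq with h | h
    · exact h
    · exfalso
      have h1 : ‖sp v‖ = 0 := le_antisymm (h ▸ hsp_le) (norm_nonneg _)
      have h2 : tm v = 0 := by linarith
      apply hvne
      rw [← mk'_sp_tm v, norm_eq_zero.mp h1, h2, mk'_zero]
  set s : ℝ := -(tm v) with hsdef
  set a₀ : EuclideanSpace ℝ (Fin n) := s⁻¹ • sp v with ha₀def
  have ha₀norm : ‖a₀‖ ≤ 1 := by
    rw [ha₀def, norm_smul, Real.norm_eq_abs, abs_inv, abs_of_pos hs_pos]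
    rw [inv_mul_le_iff₀ hs_pos, mul_one]
    exact hsp_le
  have ha₀K : ∀ x ∈ K, tm x ≤ (inner ℝ a₀ (sp x) : ℝ) := by
    intro x hx
    have h1 := hfK x hx
    rw [← hvx, inner_split] at h1
    rw [ha₀def, real_inner_smul_left]
    have h2 : s * tm x ≤ (inner ℝ (sp v) (sp x) : ℝ) := by rw [hsdef]; linarith
    calc tm x = s⁻¹ * (s * tm x) := by rw [← mul_assoc, inv_mul_cancel₀ hs_pos.ne', one_mul]
      _ ≤ s⁻¹ * (inner ℝ (sp v) (sp x) : ℝ) :=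
          mul_le_mul_of_nonneg_left h2 (inv_nonneg.mpr hs_pos.le)
  clear_value a₀
  clear ha₀def
  rcases eq_or_lt_of_le ha₀norm with hnorm1 | hlt
  · exact ⟨a₀, hnorm1, ha₀K⟩
  · by_cases hbex : ∃ b : EuclideanSpace ℝ (Fin n), b ≠ 0 ∧ ∀ x ∈ K, 0 ≤ (inner ℝ b (sp x) : ℝ)
    · obtain ⟨b, hbne, hbK⟩ := hbex
      have hbnorm : 0 < ‖b‖ := norm_pos_iff.mpr hbne
      set s₁ : ℝ := (1 + ‖a₀‖) / ‖b‖ with hs₁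
      have hs₁pos : 0 < s₁ := by positivity
      have hcont : Continuous fun r : ℝ => ‖a₀ + r • b‖ :=
        (continuous_const.add (continuous_id.smul continuous_const)).norm
      have hg0 : ‖a₀ + (0:ℝ) • b‖ < 1 := by simpa using hlt
      have hgs₁ : 1 ≤ ‖a₀ + s₁ • b‖ := by
        have h1 : ‖s₁ • b‖ ≤ ‖a₀ + s₁ • b‖ + ‖a₀‖ := by
          calc ‖s₁ • b‖ = ‖(a₀ + s₁ • b) - a₀‖ := by congr 1; abel
            _ ≤ ‖a₀ + s₁ • b‖ + ‖a₀‖ := norm_sub_le _ _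
        have h2 : ‖s₁ • b‖ = 1 + ‖a₀‖ := by
          rw [norm_smul, Real.norm_eq_abs, abs_of_pos hs₁pos, hs₁,
            div_mul_cancel₀ _ (ne_of_gt hbnorm)]
        linarith
      have hiv := intermediate_value_Icc hs₁pos.le hcont.continuousOn
      have h1mem : (1:ℝ) ∈ Icc (‖a₀ + (0:ℝ) • b‖) (‖a₀ + s₁ • b‖) := ⟨hg0.le, hgs₁⟩
      obtain ⟨r, hrmem, hr⟩ := hiv h1mem
      refine ⟨a₀ + r • b, hr, ?_⟩
      intro x hx
      have h1 := ha₀K x hx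
      have h2 := hbK x hx
      rw [inner_add_left, real_inner_smul_left]
      nlinarith [hrmem.1]
    · exfalso
      push_neg at hbex
      exact graph_contradiction K h0 hconv hcone hq0 hint hbex

@[simp] lemma sp_neg (x : EuclideanSpace ℝ (Fin (n + 1))) : sp (-x) = -(sp x) := by
  ext i; simp [sp]
@[simp] lemma tm_neg (x : EuclideanSpace ℝ (Fin (n + 1))) : tm (-x) = -(tm x) := rfl

lemma mink_neg_left (u x : EuclideanSpace ℝ (Fin (n + 1))) : mink (-u) x = -(mink u x) := by
  simp only [mink_eq_inner, sp_neg, tm_neg, inner_neg_left]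
  ring

lemma span_interior_nonempty (K : Set (EuclideanSpace ℝ (Fin (n + 1))))
    (h0 : (0 : EuclideanSpace ℝ (Fin (n + 1))) ∈ K)
    (hconv : Convex ℝ K)
    (hspan : Submodule.span ℝ K = ⊤) :
    (interior K).Nonempty := by
  rw [hconv.interior_nonempty_iff_affineSpan_eq_top]
  have h1 : (affineSpan ℝ (insert 0 K) : Set (EuclideanSpace ℝ (Fin (n + 1))))
      = (Submodule.span ℝ K : Set (EuclideanSpace ℝ (Fin (n + 1)))) :=
    affineSpan_insert_zero K
  rw [Set.insert_eq_self.mpr h0, hspan] at h1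
  rw [← AffineSubspace.coe_eq_univ_iff, h1, Submodule.top_coe]

def JL : EuclideanSpace ℝ (Fin (n + 1)) →ₗ[ℝ] EuclideanSpace ℝ (Fin (n + 1)) where
  toFun x := mk' (sp x) (-(tm x))
  map_add' x y := by
    simp only [sp_add, tm_add, mk'_add]
    congr 1
    ring
  map_smul' c x := by
    simp only [sp_smul, tm_smul, mk'_smul, RingHom.id_apply]
    congr 1
    ring

lemma JL_apply (x : EuclideanSpace ℝ (Fin (n + 1))) : JL x = mk' (sp x) (-(tm x)) := rfl

lemma JL_invol (x : EuclideanSpace ℝ (Fin (n + 1))) : JL (JL x) = x := by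
  rw [JL_apply, JL_apply, sp_mk', tm_mk', neg_neg, mk'_sp_tm]

end Stmt7

open Stmt7 in
theorem stmt_7 (n : ℕ) (hn : 1 ≤ n)
    (K : Set (EuclideanSpace ℝ (Fin (n + 1))))
    (h0 : (0 : EuclideanSpace ℝ (Fin (n + 1))) ∈ K)
    (hconv : Convex ℝ K)
    (hcone : ∀ c : ℝ, 0 ≤ c → ∀ x ∈ K, c • x ∈ K)
    (hspace : ∀ x ∈ K, x ≠ 0 → 0 < mink x x) :
    (∃ V : Submodule ℝ (EuclideanSpace ℝ (Fin (n + 1))),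
        K ⊆ (V : Set (EuclideanSpace ℝ (Fin (n + 1)))) ∧ Module.finrank ℝ V ≤ n) ∨
    ((interior K).Nonempty ∧
      ∃ u u' : EuclideanSpace ℝ (Fin (n + 1)),
        LinearIndependent ℝ ![u, u'] ∧
        u ≠ 0 ∧ mink u u = 0 ∧ u ∈ futureCone n ∧ u ∈ minkDual K ∧
        u' ≠ 0 ∧ mink u' u' = 0 ∧ u' ∈ pastCone n ∧ u' ∈ minkDual K) := by
  by_cases hspan : Submodule.span ℝ K = ⊤
  · right
    have hint : (interior K).Nonempty := span_interior_nonempty K h0 hconv hspan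
    refine ⟨hint, ?_⟩
    obtain ⟨a, ha1, haK⟩ := exists_dual_unit K h0 hconv hcone hspace hint
    have h0' : (0 : EuclideanSpace ℝ (Fin (n + 1))) ∈ JL '' K := ⟨0, h0, map_zero JL⟩
    have hconv' : Convex ℝ (JL '' K) := hconv.linear_image JL
    have hcone' : ∀ c : ℝ, 0 ≤ c → ∀ x ∈ JL '' K, c • x ∈ JL '' K := by
      rintro c hc x ⟨z, hz, rfl⟩
      exact ⟨c • z, hcone c hc z hz, map_smul JL c z⟩
    have hminkJ : ∀ z : EuclideanSpace ℝ (Fin (n + 1)), mink (JL z) (JL z) = mink z z := by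
      intro z
      rw [JL_apply, mink_self, mink_self, sp_mk', tm_mk']
      ring
    have hspace' : ∀ x ∈ JL '' K, x ≠ 0 → 0 < mink x x := by
      rintro x ⟨z, hz, rfl⟩ hne
      have hzne : z ≠ 0 := by rintro rfl; exact hne (map_zero JL)
      rw [hminkJ z]
      exact hspace z hz hzne
    have hspan' : Submodule.span ℝ (JL '' K) = ⊤ := by
      rw [Submodule.span_image, hspan, Submodule.map_top, LinearMap.range_eq_top]
      exact fun y => ⟨JL y, JL_invol y⟩
    have hint' : (interior (JL '' K)).Nonempty := span_interior_nonempty _ h0' hconv' hspan'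
    obtain ⟨a', ha1', haK'⟩ := exists_dual_unit _ h0' hconv' hcone' hspace' hint'
    have huDual : ∀ x ∈ K, 0 ≤ mink (mk' a 1) x := by
      intro x hx
      rw [mink_mk'_left, one_mul]
      have := haK x hx
      linarith
    have hu'Dual : ∀ x ∈ K, 0 ≤ mink (mk' a' (-1)) x := by
      intro x hx
      rw [mink_mk'_left]
      have h2 := haK' (JL x) ⟨x, hx, rfl⟩
      rw [JL_apply, sp_mk', tm_mk'] at h2
      linarith
    have hune : mk' a (1:ℝ) ≠ 0 := by
      intro h
      have h1 : tm (mk' a (1:ℝ)) = 1 := tm_mk' a 1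
      rw [h, tm_zero] at h1
      norm_num at h1
    have hu'ne : mk' a' (-1:ℝ) ≠ 0 := by
      intro h
      have h1 : tm (mk' a' (-1:ℝ)) = -1 := tm_mk' a' (-1)
      rw [h, tm_zero] at h1
      norm_num at h1
    have hnullu : mink (mk' a (1:ℝ)) (mk' a 1) = 0 := by
      rw [mink_self, sp_mk', tm_mk', ha1]
      norm_num
    have hnullu' : mink (mk' a' (-1:ℝ)) (mk' a' (-1)) = 0 := by
      rw [mink_self, sp_mk', tm_mk', ha1']
      norm_num
    have humem : mk' a (1:ℝ) ∈ futureCone n := by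
      rw [mem_futureCone_iff, sp_mk', tm_mk', ha1]
    have hu'mem : mk' a' (-1:ℝ) ∈ pastCone n := by
      have heq : -(mk' a' (-1:ℝ)) = mk' (-a') 1 := by
        rw [← neg_one_smul ℝ (mk' a' (-1:ℝ)), mk'_smul, neg_one_smul]
        norm_num
      have hmem : -(mk' a' (-1:ℝ)) ∈ futureCone n := by
        rw [heq, mem_futureCone_iff, sp_mk', tm_mk', norm_neg, ha1']
      exact Set.mem_neg.mpr hmem
    have hLI : LinearIndependent ℝ ![mk' a (1:ℝ), mk' a' (-1:ℝ)] := by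
      apply linearIndependent_fin2.mpr
      refine ⟨?_, ?_⟩
      · show mk' a' (-1:ℝ) ≠ 0
        exact hu'ne
      · intro c hc
        exfalso
        have hc' : c • mk' a' (-1:ℝ) = mk' a 1 := hc
        have htm : tm (c • mk' a' (-1:ℝ)) = tm (mk' a (1:ℝ)) := by rw [hc']
        rw [tm_smul, tm_mk', tm_mk'] at htm
        have hcval : c = -1 := by linarith
        have huu' : mk' a (1:ℝ) = -(mk' a' (-1:ℝ)) := by
          rw [← hc', hcval, neg_one_smul]
        have hzero : ∀ x ∈ K, mink (mk' a 1) x = 0 := by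
          intro x hx
          have h1 := huDual x hx
          have h2 := hu'Dual x hx
          have h3 : mink (mk' a' (-1:ℝ)) x = -(mink (mk' a 1) x) := by
            rw [huu', mink_neg_left, neg_neg]
          rw [h3] at h2
          linarith
        have hker : Submodule.span ℝ K ≤ LinearMap.ker (minkLinear (mk' a 1)) :=
          Submodule.span_le.mpr fun x hx => LinearMap.mem_ker.mpr (hzero x hx)
        rw [hspan] at hker
        have h4 : minkLinear (mk' a 1) (mk' (0 : EuclideanSpace ℝ (Fin n)) 1) = 0 :=
          LinearMap.mem_ker.mp (hker Submodule.mem_top)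
        have h5 : minkLinear (mk' a 1) (mk' (0 : EuclideanSpace ℝ (Fin n)) 1) = -1 := by
          show mink (mk' a 1) (mk' (0 : EuclideanSpace ℝ (Fin n)) 1) = -1
          rw [mink_mk'_left, sp_mk', tm_mk', inner_zero_right]
          ring
        rw [h4] at h5
        norm_num at h5
    exact ⟨mk' a 1, mk' a' (-1), hLI, hune, hnullu, humem, huDual, hu'ne, hnullu', hu'mem, hu'Dual⟩
  · left
    refine ⟨Submodule.span ℝ K, Submodule.subset_span, ?_⟩
    have hlt : Submodule.span ℝ K < ⊤ := lt_of_le_of_ne le_top hspan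
    have hfr := Submodule.finrank_lt hspan
    have hdim : Module.finrank ℝ (EuclideanSpace ℝ (Fin (n + 1))) = n + 1 := by
      simp [finrank_euclideanSpace]
    rw [hdim] at hfr
    omega
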